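/- Let n ≥ 2 and let β ∈ SB_n with x_{n−1} | β. Then for all m ≥ 1, c_{n+m}(β) = c_n(β) · F_{2m−1}. -/

import Mathlib

/-- The defining relations of the positive braid monoid `MB_∞` on generators
`x i`, `i : ℕ+`: the braid relations and the far-commutation relations. -/
def BraidRel : FreeMonoid ℕ+ → FreeMonoid ℕ+ → Prop := fun a b =>
  (∃ i : ℕ+, a = FreeMonoid.of (i + 1) * FreeMonoid.of i * FreeMonoid.of (i + 1) ∧
      b = FreeMonoid.of i * FreeMonoid.of (i + 1) * FreeMonoid.of i) ∨
  (∃ i j : ℕ+, i + 2 ≤ j ∧ a = FreeMonoid.of i * FreeMonoid.of j ∧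
      b = FreeMonoid.of j * FreeMonoid.of i)

/-- The congruence generated by the braid relations. -/
def braidCon : Con (FreeMonoid ℕ+) := conGen BraidRel

/-- The positive braid monoid `MB_∞`. -/
abbrev MB : Type := braidCon.Quotient

/-- The generator `x_i` of `MB_∞`, for `i : ℕ+`. -/
def braidGen (i : ℕ+) : MB := braidCon.mk' (FreeMonoid.of i)

/-- The generator `x_i` of `MB_∞`, indexed by a natural number `i ≥ 1`
(junk value `x_1` for `i = 0`). -/
def X (i : ℕ) : MB := braidGen ⟨max i 1, lt_of_lt_of_le one_pos (le_max_right i 1)⟩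

/-- `x_i` divides `β`: `β = δ * x_i * ε` for some `δ ε ∈ MB_∞`. -/
def GenDvd (i : ℕ) (β : MB) : Prop := ∃ δ ε : MB, β = δ * X i * ε

/-- `x_i` left-divides `β`: `β = x_i * ε` for some `ε ∈ MB_∞`. -/
def GenDvdL (i : ℕ) (β : MB) : Prop := ∃ ε : MB, β = X i * ε

/-- `x_i` right-divides `β`: `β = δ * x_i` for some `δ ∈ MB_∞`. -/
def GenDvdR (i : ℕ) (β : MB) : Prop := ∃ δ : MB, β = δ * X i

/-- The set `SB_n` of simple braids in `MB_n`: products of words in the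
generators `x_1, …, x_{n-1}` in which each generator appears at most once. -/
def SB (n : ℕ) : Set MB :=
  {β | ∃ w : List ℕ, w.Nodup ∧ (∀ i ∈ w, 1 ≤ i ∧ i < n) ∧ β = (w.map X).prod}

/-- The simple centralizer `C_n(β)` of `β` in `SB_n`. -/
def C (n : ℕ) (β : MB) : Set MB := {γ ∈ SB n | β * γ = γ * β}

/-- `c_n(β)`, the cardinality of the simple centralizer `C_n(β)`. -/
noncomputable def c (n : ℕ) (β : MB) : ℕ := (C n β).ncard

-- hom builder
def mkHom {M : Type*} [Monoid M] (f : ℕ+ → M)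
    (hb : ∀ i : ℕ+, f (i + 1) * f i * f (i + 1) = f i * f (i + 1) * f i)
    (hc : ∀ i j : ℕ+, i + 2 ≤ j → f i * f j = f j * f i) : MB →* M :=
  braidCon.lift (FreeMonoid.lift f) (Con.conGen_le.mpr (by
    rintro a b (⟨i, rfl, rfl⟩ | ⟨i, j, hij, rfl, rfl⟩) <;>
      simp only [Con.ker_rel, map_mul, FreeMonoid.lift_eval_of]
    · exact hb i
    · exact hc i j hij))

@[simp] lemma mkHom_gen {M : Type*} [Monoid M] (f : ℕ+ → M) (hb hc) (i : ℕ+) :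
    mkHom f hb hc (braidGen i) = f i := by
  simp [mkHom, braidGen, Con.lift_mk']
  rfl

lemma braidCon_of {a b : FreeMonoid ℕ+} (h : BraidRel a b) :
    braidCon.mk' a = braidCon.mk' b := by
  apply (Con.eq braidCon).mpr
  exact ConGen.Rel.of _ _ h

lemma braid_rel_gen (i : ℕ+) :
    braidGen (i + 1) * braidGen i * braidGen (i + 1) = braidGen i * braidGen (i + 1) * braidGen i := by
  simp only [braidGen, ← map_mul]
  exact braidCon_of (Or.inl ⟨i, rfl, rfl⟩)

lemma comm_rel_gen (i j : ℕ+) (h : i + 2 ≤ j) :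
    braidGen i * braidGen j = braidGen j * braidGen i := by
  simp only [braidGen, ← map_mul]
  exact braidCon_of (Or.inr ⟨i, j, h, rfl, rfl⟩)

---- basics about X and prodX
def prodX (w : List ℕ) : MB := (w.map X).prod

@[simp] lemma prodX_nil : prodX [] = 1 := rfl
@[simp] lemma prodX_cons (i : ℕ) (w : List ℕ) : prodX (i :: w) = X i * prodX w := by
  simp [prodX]
@[simp] lemma prodX_append (u v : List ℕ) : prodX (u ++ v) = prodX u * prodX v := by
  simp [prodX]
@[simp] lemma prodX_single (i : ℕ) : prodX [i] = X i := by simp [prodX]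

lemma X_eq (i : ℕ) (h : 1 ≤ i) : X i = braidGen ⟨i, h⟩ := by
  simp only [X]
  congr 1
  exact Subtype.ext (Nat.max_eq_left h)

lemma pnat_val (i : ℕ) (h : 1 ≤ i) : ((⟨i, h⟩ : ℕ+) : ℕ) = i := rfl

lemma X_comm (i j : ℕ) (hi : 1 ≤ i) (h : i + 2 ≤ j) : X i * X j = X j * X i := by
  have hj : 1 ≤ j := by omega
  rw [X_eq i hi, X_eq j hj]
  exact comm_rel_gen _ _ (by
    apply (PNat.coe_le_coe _ _).mp
    exact h)

lemma X_comm_list (i : ℕ) (w : List ℕ) (hi : 1 ≤ i)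
    (hw : ∀ j ∈ w, 1 ≤ j ∧ (j + 2 ≤ i ∨ i + 2 ≤ j)) :
    X i * prodX w = prodX w * X i := by
  induction w with
  | nil => simp
  | cons a l ih =>
    obtain ⟨ha1, ha2⟩ := hw a (by simp)
    have hcomm : X i * X a = X a * X i := by
      rcases ha2 with h | h
      · exact (X_comm a i ha1 h).symm
      · exact X_comm i a hi h
    rw [prodX_cons, ← mul_assoc, hcomm, mul_assoc, ih (fun j hj => hw j (by simp [hj])),
      mul_assoc]

lemma X_comm_list' (i : ℕ) (w : List ℕ) (hi : 1 ≤ i)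
    (hw : ∀ j ∈ w, 1 ≤ j ∧ (j + 2 ≤ i ∨ i + 2 ≤ j)) :
    ∀ z : MB, X i * (prodX w * z) = prodX w * (X i * z) := by
  intro z
  rw [← mul_assoc, X_comm_list i w hi hw, mul_assoc]

lemma prodX_comm_lists (u v : List ℕ) (hu : ∀ i ∈ u, 1 ≤ i)
    (h : ∀ i ∈ u, ∀ j ∈ v, 1 ≤ j ∧ (i + 2 ≤ j ∨ j + 2 ≤ i)) :
    prodX u * prodX v = prodX v * prodX u := by
  induction u with
  | nil => simp
  | cons a l ih =>
    have ha : ∀ j ∈ v, 1 ≤ j ∧ (j + 2 ≤ a ∨ a + 2 ≤ j) := by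
      intro j hj
      obtain ⟨h2, h3⟩ := h a (by simp) j hj
      exact ⟨h2, h3.symm⟩
    rw [prodX_cons, mul_assoc, ih (fun i hi => hu i (by simp [hi]))
      (fun i hi => h i (by simp [hi])), ← mul_assoc,
      X_comm_list a v (hu a (by simp)) ha, mul_assoc]

---- the permutation representation
def sw (i : ℕ) : Equiv.Perm ℕ := Equiv.swap i (i + 1)


lemma sw_braid' (a : ℕ) : sw (a + 1) * sw a * sw (a + 1) = sw a * sw (a + 1) * sw a := by
  ext x
  simp only [sw, Equiv.Perm.mul_apply, Equiv.swap_apply_def]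
  split_ifs <;> omega

lemma sw_comm (a b : ℕ) (h : a + 2 ≤ b) : sw a * sw b = sw b * sw a := by
  ext x
  simp only [sw, Equiv.Perm.mul_apply, Equiv.swap_apply_def]
  split_ifs <;> omega

def P : MB →* Equiv.Perm ℕ :=
  mkHom (fun i => sw (i : ℕ))
    (by
      intro i
      show sw ((i+1 : ℕ+) : ℕ) * sw i * sw ((i+1 : ℕ+) : ℕ) = _
      have : ((i + 1 : ℕ+) : ℕ) = (i : ℕ) + 1 := by push_cast; ring
      rw [this]
      exact sw_braid' i)
    (by
      intro i j hij
      show sw _ * sw _ = sw _ * sw _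
      apply sw_comm
      have := (PNat.coe_le_coe _ _).mpr hij
      push_cast at this
      omega)

@[simp] lemma P_X (i : ℕ) (h : 1 ≤ i) : P (X i) = sw i := by
  rw [X_eq i h]
  exact mkHom_gen _ _ _ _

def PL (w : List ℕ) : Equiv.Perm ℕ := (w.map sw).prod

@[simp] lemma PL_nil : PL [] = 1 := rfl
@[simp] lemma PL_cons (i : ℕ) (w : List ℕ) : PL (i :: w) = sw i * PL w := by simp [PL]
@[simp] lemma PL_append (u v : List ℕ) : PL (u ++ v) = PL u * PL v := by simp [PL]
@[simp] lemma PL_single (i : ℕ) : PL [i] = sw i := by simp [PL]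

lemma P_prodX (w : List ℕ) (h : ∀ i ∈ w, 1 ≤ i) : P (prodX w) = PL w := by
  induction w with
  | nil => simp [prodX, PL]
  | cons a l ih =>
    rw [prodX_cons, PL_cons, map_mul, ih (fun i hi => h i (by simp [hi])),
      P_X a (h a (by simp))]

---- permutation fixing lemmas
lemma sw_apply_high (j x : ℕ) (h : j + 1 < x) : sw j x = x := by
  simp only [sw, Equiv.swap_apply_def]; split_ifs <;> omega

lemma sw_apply_low (j x : ℕ) (h : x < j) : sw j x = x := by
  simp only [sw, Equiv.swap_apply_def]; split_ifs <;> omega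

@[simp] lemma sw_apply_self (j : ℕ) : sw j j = j + 1 := by simp [sw]
@[simp] lemma sw_apply_succ (j : ℕ) : sw j (j + 1) = j := by simp [sw]

lemma PL_fix_high (w : List ℕ) (x : ℕ) (h : ∀ j ∈ w, j + 1 < x) : PL w x = x := by
  induction w with
  | nil => simp
  | cons a l ih =>
    rw [PL_cons, Equiv.Perm.mul_apply, ih (fun j hj => h j (by simp [hj])),
      sw_apply_high a x (h a (by simp))]

lemma PL_fix_low (w : List ℕ) (x : ℕ) (h : ∀ j ∈ w, x < j) : PL w x = x := by
  induction w with
  | nil => simp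
  | cons a l ih =>
    rw [PL_cons, Equiv.Perm.mul_apply, ih (fun j hj => h j (by simp [hj])),
      sw_apply_low a x (h a (by simp))]

lemma PL_inv_fix_high (w : List ℕ) (x : ℕ) (h : ∀ j ∈ w, j + 1 < x) : (PL w)⁻¹ x = x := by
  have := PL_fix_high w x h
  exact Equiv.Perm.inv_eq_iff_eq.mpr this.symm

lemma PL_inv_fix_low (w : List ℕ) (x : ℕ) (h : ∀ j ∈ w, x < j) : (PL w)⁻¹ x = x := by
  have := PL_fix_low w x h
  exact Equiv.Perm.inv_eq_iff_eq.mpr this.symm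

-- a perm fixing everything outside S maps S into S
lemma perm_mem_of_fix_compl (f : Equiv.Perm ℕ) (S : Set ℕ) (hf : ∀ x, x ∉ S → f x = x) :
    ∀ x ∈ S, f x ∈ S := by
  intro x hx
  by_contra hfx
  have h2 := hf _ hfx
  have : x = f x := f.injective h2.symm
  exact hfx (this ▸ hx)

lemma PL_le_of_le (w : List ℕ) (L : ℕ) (hw : ∀ j ∈ w, j + 1 ≤ L) :
    ∀ x ≤ L, PL w x ≤ L := by
  intro x hx
  have := perm_mem_of_fix_compl (PL w) {y | y ≤ L}
    (fun y hy => PL_fix_high w y (fun j hj => by have := hw j hj; simp at hy; omega)) x hx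
  exact this

lemma PL_ge_of_ge (w : List ℕ) (A : ℕ) (hw : ∀ j ∈ w, A ≤ j) :
    ∀ x, A ≤ x → A ≤ PL w x := by
  intro x hx
  have := perm_mem_of_fix_compl (PL w) {y | A ≤ y}
    (fun y hy => PL_fix_low w y (fun j hj => by have := hw j hj; simp at hy; omega)) x hx
  exact this

lemma PL_inv_ge_of_ge (w : List ℕ) (A : ℕ) (hw : ∀ j ∈ w, A ≤ j) :
    ∀ x, A ≤ x → A ≤ (PL w)⁻¹ x := by
  intro x hx
  have := perm_mem_of_fix_compl (PL w)⁻¹ {y | A ≤ y}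
    (fun y hy => PL_inv_fix_low w y (fun j hj => by have := hw j hj; simp at hy; omega)) x hx
  exact this

lemma PL_le_of_le' (w : List ℕ) (L : ℕ) (hw : ∀ j ∈ w, j + 1 ≤ L) :
    ∀ x ≤ L, (PL w)⁻¹ x ≤ L := by
  intro x hx
  have := perm_mem_of_fix_compl (PL w)⁻¹ {y | y ≤ L}
    (fun y hy => PL_inv_fix_high w y (fun j hj => by have := hw j hj; simp at hy; omega)) x hx
  exact this

---- letter-membership invariant
def chi (j : ℕ) : MB →* ℕ :=
  mkHom (fun i => if (i : ℕ) = j then 0 else 1)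
    (by intro i; split_ifs <;> simp_all)
    (by intro i k h; split_ifs <;> simp_all [Nat.mul_comm])

lemma chi_X (j i : ℕ) (h : 1 ≤ i) : chi j (X i) = if i = j then 0 else 1 := by
  rw [X_eq i h]; exact mkHom_gen _ _ _ _

lemma chi_prodX_eq_zero (j : ℕ) (w : List ℕ) (hw : ∀ i ∈ w, 1 ≤ i) :
    chi j (prodX w) = 0 ↔ j ∈ w := by
  induction w with
  | nil => simp [chi]
  | cons a l ih =>
    rw [prodX_cons, map_mul, chi_X j a (hw a (by simp)), Nat.mul_eq_zero,
      ih (fun i hi => hw i (by simp [hi]))]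
    simp only [List.mem_cons]
    constructor
    · rintro (h | h)
      · left; split_ifs at h with hh; exact hh.symm
      · right; exact h
    · rintro (h | h)
      · left; simp [h]
      · right; exact h

---- the marker monoid for cancellation
def bad (k : ℕ) : MB →* ℕ :=
  mkHom (fun i => if k - 1 ≤ (i : ℕ) ∧ (i : ℕ) ≤ k + 1 then 0 else 1)
    (by intro i; split_ifs <;> simp_all)
    (by intro i k' h; split_ifs <;> simp_all [Nat.mul_comm])

lemma bad_gen (k : ℕ) (i : ℕ+) :
    bad k (braidGen i) = if k - 1 ≤ (i : ℕ) ∧ (i : ℕ) ≤ k + 1 then 0 else 1 := by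
  simp [bad]

abbrev TM (_k : ℕ) : Type := Option (MB × Bool)

def tmul (k : ℕ) : TM k → TM k → TM k
  | none, _ => none
  | some _, none => none
  | some (w, false), some (w', c) => some (w * w', c)
  | some (w, true), some (w', false) =>
      if bad k w' = 0 then none else some (w * w', true)
  | some (w, true), some (w', true) => none

instance TMmonoid (k : ℕ) : Monoid (TM k) where
  mul := tmul k
  one := some (1, false)
  one_mul a := by
    rcases a with _ | ⟨w, c⟩
    · rfl
    · show tmul k (some (1, false)) _ = _
      simp [tmul]
  mul_one a := by
    rcases a with _ | ⟨w, c⟩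
    · rfl
    · rcases c with _ | _
      · show tmul k _ (some (1, false)) = _
        simp [tmul]
      · show tmul k _ (some (1, false)) = _
        simp [tmul, map_one]
  mul_assoc a b c := by
    rcases a with _ | ⟨a, _ | _⟩ <;> rcases b with _ | ⟨b, _ | _⟩ <;>
      rcases c with _ | ⟨c, _ | _⟩ <;>
      show tmul k (tmul k _ _) _ = tmul k _ (tmul k _ _) <;>
      simp only [tmul] <;>
      try rfl
    all_goals
      (try split_ifs) <;>
      simp_all [tmul, map_mul, Nat.mul_eq_zero, mul_assoc] <;>
      (try split_ifs) <;>
      simp_all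

lemma tmul_def (k : ℕ) (x y : TM k) : x * y = tmul k x y := rfl

lemma TM_one_def (k : ℕ) : (1 : TM k) = some (1, false) := rfl

def theta (k : ℕ) (hk : 2 ≤ k) : MB →* TM k :=
  mkHom (fun i => (if (i : ℕ) = k then some (1, true) else some (braidGen i, false) : TM k))
    (by
      intro i
      by_cases h1 : (i : ℕ) = k
      · have h2 : ((i + 1 : ℕ+) : ℕ) ≠ k := by push_cast; omega
        rw [if_pos h1, if_neg h2]
        show tmul k (tmul k _ _) _ = tmul k (tmul k _ _) _
        have hb : bad k (braidGen (i + 1)) = 0 := by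
          rw [bad_gen]
          have : ((i + 1 : ℕ+) : ℕ) = k + 1 := by push_cast; omega
          rw [if_pos (by omega)]
        simp only [tmul, hb, if_pos rfl]
        simp [tmul]
      · by_cases h2 : ((i : ℕ) + 1) = k
        · have h2' : ((i + 1 : ℕ+) : ℕ) = k := by push_cast; omega
          rw [if_neg h1, if_pos h2']
          show tmul k (tmul k _ _) _ = tmul k (tmul k _ _) _
          have hb : bad k (braidGen i) = 0 := by
            rw [bad_gen, if_pos (by omega)]
          simp only [tmul, hb, if_pos rfl]
          simp [tmul, hb]
        · have h2' : ((i + 1 : ℕ+) : ℕ) ≠ k := by push_cast; omega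
          rw [if_neg h1, if_neg h2']
          show tmul k (tmul k _ _) _ = tmul k (tmul k _ _) _
          simp only [tmul]
          rw [braid_rel_gen])
    (by
      intro i j hij
      have hij' : (i : ℕ) + 2 ≤ (j : ℕ) := by exact_mod_cast hij
      by_cases h1 : (i : ℕ) = k
      · have h2 : (j : ℕ) ≠ k := by omega
        rw [if_pos h1, if_neg h2]
        show tmul k _ _ = tmul k _ _
        have hb : bad k (braidGen j) ≠ 0 := by
          rw [bad_gen, if_neg (by omega)]; omega
        simp only [tmul, if_neg hb]
        simp
      · by_cases h2 : (j : ℕ) = k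
        · rw [if_neg h1, if_pos h2]
          show tmul k _ _ = tmul k _ _
          have hb : bad k (braidGen i) ≠ 0 := by
            rw [bad_gen, if_neg (by omega)]; omega
          simp only [tmul, if_neg hb]
          simp
        · rw [if_neg h1, if_neg h2]
          show tmul k _ _ = tmul k _ _
          simp only [tmul]
          rw [comm_rel_gen i j hij])

lemma theta_X_ne (k : ℕ) (hk : 2 ≤ k) (i : ℕ) (h1 : 1 ≤ i) (h2 : i ≠ k) :
    theta k hk (X i) = some (X i, false) := by
  rw [X_eq i h1]
  simp only [theta, mkHom_gen]
  exact (mkHom_gen _ _ _ _).trans (if_neg h2)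

lemma theta_X_eq (k : ℕ) (hk : 2 ≤ k) : theta k hk (X k) = some (1, true) := by
  have h1 : 1 ≤ k := by omega
  rw [X_eq k h1]
  simp only [theta, mkHom_gen]
  exact (mkHom_gen _ _ _ _).trans (if_pos rfl)

lemma theta_prodX (k : ℕ) (hk : 2 ≤ k) (w : List ℕ) (hw : ∀ i ∈ w, 1 ≤ i ∧ i ≠ k) :
    theta k hk (prodX w) = some (prodX w, false) := by
  induction w with
  | nil => simp [TM_one_def]
  | cons a l ih =>
    rw [prodX_cons, map_mul, theta_X_ne k hk a (hw a (by simp)).1 (hw a (by simp)).2,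
      ih (fun i hi => hw i (by simp [hi])), tmul_def]
    simp [tmul]

lemma cancel_X (k : ℕ) (hk : 2 ≤ k) (a b : MB) (la lb : List ℕ)
    (hla : ∀ i ∈ la, 1 ≤ i ∧ i ≠ k) (hlb : ∀ i ∈ lb, 1 ≤ i ∧ i ≠ k)
    (ha : a = prodX la) (hb : b = prodX lb)
    (h : a * X k = b * X k) : a = b := by
  have := congrArg (theta k hk) h
  rw [map_mul, map_mul, theta_X_eq, ha, hb, theta_prodX k hk la hla,
    theta_prodX k hk lb hlb, tmul_def, tmul_def] at this
  simp only [tmul, mul_one] at this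
  rw [ha, hb]
  exact (Prod.mk.injEq _ _ _ _ ▸ (Option.some.injEq _ _ ▸ this)).1

lemma cancel_prodX (cut : ℕ) (h0 : List ℕ) (hnd : h0.Nodup)
    (hh : ∀ i ∈ h0, cut ≤ i ∧ 2 ≤ i)
    (a b : MB) (la lb : List ℕ)
    (hla : ∀ i ∈ la, 1 ≤ i ∧ i < cut) (hlb : ∀ i ∈ lb, 1 ≤ i ∧ i < cut)
    (ha : a = prodX la) (hb : b = prodX lb)
    (h : a * prodX h0 = b * prodX h0) : a = b := by
  induction h0 using List.reverseRecOn with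
  | nil => simpa using h
  | append_singleton h' ℓ ih =>
    have hℓ : 2 ≤ ℓ := (hh ℓ (by simp)).2
    have step : a * prodX h' = b * prodX h' := by
      apply cancel_X ℓ hℓ _ _ (la ++ h') (lb ++ h')
      · intro i hi
        rcases List.mem_append.mp hi with hi | hi
        · have := hla i hi; have := hh ℓ (by simp); omega
        · refine ⟨by have := hh i (by simp [hi]); omega, ?_⟩
          intro hcon
          subst hcon
          exact (List.nodup_append'.mp (by simpa using hnd)).2.2 hi (by simp)
      · intro i hi
        rcases List.mem_append.mp hi with hi | hi
        · have := hlb i hi; have := hh ℓ (by simp); omega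
        · refine ⟨by have := hh i (by simp [hi]); omega, ?_⟩
          intro hcon
          subst hcon
          exact (List.nodup_append'.mp (by simpa using hnd)).2.2 hi (by simp)
      · rw [ha, prodX_append]
      · rw [hb, prodX_append]
      · simpa [mul_assoc] using h
    exact ih (hnd.sublist (by simp)) (fun i hi => hh i (by simp [hi])) step

---- normal form lists
def ins (s t : ℕ) (w : List ℕ) : List ℕ :=
  w.takeWhile (fun x => x != s) ++ t :: w.dropWhile (fun x => x != s)

lemma ins_spec (s t : ℕ) (w : List ℕ) (h : s ∈ w) :
    ∃ pre suf, w = pre ++ s :: suf ∧ ins s t w = pre ++ t :: s :: suf ∧ s ∉ pre := by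
  induction w with
  | nil => simp at h
  | cons a l ih =>
    by_cases ha : a = s
    · subst ha
      refine ⟨[], l, by simp, ?_, by simp⟩
      simp [ins]
    · have hs : s ∈ l := by
        rcases List.mem_cons.mp h with h | h
        · exact absurd h.symm ha
        · exact h
      obtain ⟨pre, suf, h1, h2, h3⟩ := ih hs
      refine ⟨a :: pre, suf, by simp [h1], ?_, by simp [h3, Ne.symm ha, ha]⟩
      have hba : (a != s) = true := by simpa using ha
      simp only [ins, List.takeWhile_cons, hba, List.dropWhile_cons, if_pos hba]
      simpa [ins] using h2

def NF (a : ℕ) : ℕ → List (List ℕ)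
  | 0 => [[]]
  | 1 => [[], [a]]
  | (k + 2) =>
      NF a (k + 1) ++ ((NF a (k + 1)).map (· ++ [a + k + 1]))
        ++ ((NF a (k + 1)).filter (fun w => (a + k) ∈ w)).map (ins (a + k) (a + k + 1))

lemma NF_mem_prop (a : ℕ) (k : ℕ) (w : List ℕ) (hw : w ∈ NF a k) :
    w.Nodup ∧ ∀ i ∈ w, a ≤ i ∧ i < a + k := by
  induction k using Nat.strong_induction_on generalizing w with
  | _ k ih =>
    match k with
    | 0 => simp [NF] at hw; subst hw; simp
    | 1 =>
      rcases (by simpa [NF] using hw : w = [] ∨ w = [a]) with rfl | rfl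
      · simp
      · simp
    | (k + 2) =>
      simp only [NF, List.mem_append, List.mem_map, List.mem_filter] at hw
      rcases hw with (hw | ⟨w0, hw0, rfl⟩) | ⟨w0, ⟨hw0, hmem⟩, rfl⟩
      · obtain ⟨h1, h2⟩ := ih (k+1) (by omega) w hw
        exact ⟨h1, fun i hi => by have := h2 i hi; omega⟩
      · obtain ⟨h1, h2⟩ := ih (k+1) (by omega) w0 hw0
        constructor
        · simp only [List.nodup_append', List.nodup_cons]
          refine ⟨h1, by simp, ?_⟩
          intro x hx
          simp only [List.mem_singleton]
          intro hxx
          subst hxx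
          have := h2 _ hx
          omega
        · intro i hi
          rcases List.mem_append.mp hi with hi | hi
          · have := h2 i hi; omega
          · simp at hi; omega
      · have hs : (a + k) ∈ w0 := by simpa using hmem
        obtain ⟨h1, h2⟩ := ih (k+1) (by omega) w0 hw0
        obtain ⟨pre, suf, he, hins, hpre⟩ := ins_spec (a+k) (a+k+1) w0 hs
        rw [hins]
        have hperm : (pre ++ (a+k+1) :: (a+k) :: suf).Perm ((a+k+1) :: (pre ++ (a+k) :: suf)) :=
          List.perm_middle
        constructor
        · apply hperm.nodup_iff.mpr
          rw [← he]
          refine List.nodup_cons.mpr ⟨?_, h1⟩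
          intro hc
          have := h2 _ hc; omega
        · intro i hi
          have : i ∈ (a+k+1) :: (pre ++ (a+k) :: suf) := hperm.mem_iff.mp hi
          rcases List.mem_cons.mp this with rfl | hh
          · omega
          · rw [← he] at hh; have := h2 i hh; omega

lemma PL_comm_sw (i : ℕ) (l : List ℕ) (h : ∀ j ∈ l, j + 2 ≤ i) :
    sw i * PL l = PL l * sw i := by
  induction l with
  | nil => simp
  | cons b m ih =>
    rw [PL_cons, ← mul_assoc, ← sw_comm b i (h b (by simp)), mul_assoc,
      ih (fun j hj => h j (by simp [hj])), mul_assoc]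

lemma PL_top (s : ℕ) (w : List ℕ) (hnd : w.Nodup) (hw : ∀ i ∈ w, i ≤ s) (hs : s ∈ w) :
    PL w (s + 1) ≤ s := by
  obtain ⟨p, q, rfl⟩ := List.append_of_mem hs
  have hnds : s ∉ q := by
    have := List.nodup_append'.mp hnd
    simpa using (List.nodup_cons.mp this.2.1).1
  have hq : PL q (s + 1) = s + 1 :=
    PL_fix_high _ _ (fun j hj => by
      have h1 := hw j (by simp [hj])
      have h2 : j ≠ s := fun hc => hnds (hc ▸ hj)
      omega)
  rw [PL_append, PL_cons, Equiv.Perm.mul_apply, Equiv.Perm.mul_apply, hq, sw_apply_succ]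
  apply PL_le_of_le p s
  · intro j hj
    have h1 := hw j (by simp [hj])
    have h2 : j ≠ s := by
      have := List.nodup_append'.mp hnd
      intro hc
      exact absurd (by simp : s ∈ s :: q) (this.2.2 (hc ▸ hj))
    omega
  · omega

lemma PL_top_inv (s : ℕ) (w : List ℕ) (hnd : w.Nodup) (hw : ∀ i ∈ w, i ≤ s) (hs : s ∈ w) :
    (PL w)⁻¹ (s + 1) ≤ s := by
  obtain ⟨p, q, rfl⟩ := List.append_of_mem hs
  have hndp : s ∉ p := by
    have := List.nodup_append'.mp hnd
    intro hc
    exact absurd (by simp : s ∈ s :: q) (this.2.2 hc)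
  have hnds : s ∉ q := by
    have := List.nodup_append'.mp hnd
    simpa using (List.nodup_cons.mp this.2.1).1
  have hp : (PL p)⁻¹ (s + 1) = s + 1 :=
    PL_inv_fix_high _ _ (fun j hj => by
      have h1 := hw j (by simp [hj])
      have h2 : j ≠ s := fun hc => hndp (hc ▸ hj)
      omega)
  rw [PL_append, PL_cons]
  simp only [mul_inv_rev, Equiv.Perm.mul_apply]
  rw [hp]
  have : (sw s)⁻¹ (s + 1) = s := by
    simp [sw]
  rw [this]
  apply PL_le_of_le' q s
  · intro j hj
    have h1 := hw j (by simp [hj])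
    have h2 : j ≠ s := fun hc => hnds (hc ▸ hj)
    omega
  · omega

lemma PL_ins (s : ℕ) (w0 : List ℕ) (hnd : w0.Nodup) (hw : ∀ i ∈ w0, i ≤ s) (hs : s ∈ w0) :
    PL (ins s (s + 1) w0) = sw (s + 1) * PL w0 := by
  obtain ⟨pre, suf, he, hins, hpre⟩ := ins_spec s (s + 1) w0 hs
  rw [hins, he]
  have hprel : ∀ j ∈ pre, j + 2 ≤ s + 1 := by
    intro j hj
    have h1 := hw j (by rw [he]; simp [hj])
    have h2 : j ≠ s := fun hc => hpre (hc ▸ hj)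
    omega
  simp only [PL_append, PL_cons]
  rw [← mul_assoc, ← PL_comm_sw (s+1) pre hprel]
  group

lemma NF_d_top (a k : ℕ) (w : List ℕ) (hw : w ∈ NF a k) :
    (PL w)⁻¹ (a + k + 1) = a + k + 1 := by
  obtain ⟨h1, h2⟩ := NF_mem_prop a k w hw
  exact PL_inv_fix_high _ _ (fun j hj => by have := h2 j hj; omega)

lemma NF_fix (a k : ℕ) (w : List ℕ) (hw : w ∈ NF a k) (x : ℕ) (hx : a + k < x) :
    PL w x = x ∧ (PL w)⁻¹ x = x := by
  obtain ⟨h1, h2⟩ := NF_mem_prop a k w hw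
  constructor
  · exact PL_fix_high _ _ (fun j hj => by have := h2 j hj; omega)
  · exact PL_inv_fix_high _ _ (fun j hj => by have := h2 j hj; omega)

lemma NF_inj (a k : ℕ) : ∀ w ∈ NF a k, ∀ w' ∈ NF a k, PL w = PL w' → w = w' := by
  induction k using Nat.strong_induction_on with
  | _ k ih =>
    match k with
    | 0 => intro w hw w' hw' _; simp [NF] at hw hw'; rw [hw, hw']
    | 1 =>
      intro w hw w' hw' heq
      rcases (by simpa [NF] using hw : w = [] ∨ w = [a]) with rfl | rfl <;>
        rcases (by simpa [NF] using hw' : w' = [] ∨ w' = [a]) with rfl | rfl <;> try rfl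
      · exfalso
        have := congrFun (congrArg (fun (f : Equiv.Perm ℕ) => (f : ℕ → ℕ)) heq) a
        simp at this
      · exfalso
        have := congrFun (congrArg (fun (f : Equiv.Perm ℕ) => (f : ℕ → ℕ)) heq) a
        simp at this
    | (k + 2) =>
      intro w hw w' hw' heq
      -- the three groups, with discriminator d = (PL w)⁻¹ (a+k+2)
      have key : ∀ v, v ∈ NF a (k+2) →
          (v ∈ NF a (k+1) ∧ (PL v)⁻¹ (a+k+2) = a+k+2) ∨
          ((∃ v0 ∈ NF a (k+1), v = v0 ++ [a+k+1] ∧ PL v = PL v0 * sw (a+k+1)) ∧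
            (PL v)⁻¹ (a+k+2) = a+k+1) ∨
          ((∃ v0 ∈ NF a (k+1), (a+k) ∈ v0 ∧ v = ins (a+k) (a+k+1) v0 ∧
            PL v = sw (a+k+1) * PL v0) ∧ (PL v)⁻¹ (a+k+2) < a+k+1) := by
        intro v hv
        simp only [NF, List.mem_append, List.mem_map, List.mem_filter] at hv
        rcases hv with (hv | ⟨v0, hv0, rfl⟩) | ⟨v0, ⟨hv0, hmem⟩, rfl⟩
        · exact Or.inl ⟨hv, (NF_fix a (k+1) v hv (a+k+2) (by omega)).2⟩
        · refine Or.inr (Or.inl ⟨⟨v0, hv0, rfl, by simp [PL_append]⟩, ?_⟩)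
          rw [PL_append, PL_single, mul_inv_rev, Equiv.Perm.mul_apply,
            (NF_fix a (k+1) v0 hv0 (a+k+2) (by omega)).2]
          · show (Equiv.swap (a+k+1) (a+k+2))⁻¹ _ = _
            simp
        · have hmem' : (a + k) ∈ v0 := by simpa using hmem
          obtain ⟨hnd0, hb0⟩ := NF_mem_prop a (k+1) v0 hv0
          have hle : ∀ i ∈ v0, i ≤ a + k := fun i hi => by have := hb0 i hi; omega
          have hPL : PL (ins (a+k) (a+k+1) v0) = sw (a+k+1) * PL v0 :=
            PL_ins (a+k) v0 hnd0 hle hmem'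
          refine Or.inr (Or.inr ⟨⟨v0, hv0, hmem', rfl, hPL⟩, ?_⟩)
          rw [hPL, mul_inv_rev, Equiv.Perm.mul_apply]
          have h1 : (sw (a+k+1))⁻¹ (a+k+2) = a+k+1 := by simp [sw]
          rw [h1]
          have := PL_top_inv (a+k) v0 hnd0 hle hmem'
          omega
      rcases key w hw with ⟨hA, dA⟩ | ⟨⟨w0, hw0, rfl, hPw⟩, dB⟩ | ⟨⟨w0, hw0, hm0, rfl, hPw⟩, dC⟩ <;>
        rcases key w' hw' with ⟨hA', dA'⟩ | ⟨⟨w0', hw0', rfl, hPw'⟩, dB'⟩ |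
          ⟨⟨w0', hw0', hm0', rfl, hPw'⟩, dC'⟩
      · exact ih (k+1) (by omega) w hA w' hA' heq
      · rw [heq] at dA; omega
      · rw [heq] at dA; omega
      · rw [heq] at dB; omega
      · have : PL w0 = PL w0' := by
          have := hPw.symm.trans (heq.trans hPw')
          exact mul_right_cancel this
        rw [ih (k+1) (by omega) w0 hw0 w0' hw0' this]
      · rw [heq] at dB; omega
      · rw [heq] at dC; omega
      · rw [heq] at dC; omega
      · have : PL w0 = PL w0' := by
          have := hPw.symm.trans (heq.trans hPw')
          exact mul_left_cancel this
        rw [ih (k+1) (by omega) w0 hw0 w0' hw0' this]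

---- group discriminator lemmas (standalone versions)
lemma NF_dB (a k : ℕ) (v0 : List ℕ) (hv0 : v0 ∈ NF a (k+1)) :
    (PL (v0 ++ [a+k+1]))⁻¹ (a+k+2) = a+k+1 := by
  rw [PL_append, PL_single, mul_inv_rev, Equiv.Perm.mul_apply,
    (NF_fix a (k+1) v0 hv0 (a+k+2) (by omega)).2]
  show (Equiv.swap (a+k+1) (a+k+2))⁻¹ _ = _
  simp

lemma NF_dC (a k : ℕ) (v0 : List ℕ) (hv0 : v0 ∈ NF a (k+1)) (hm : (a+k) ∈ v0) :
    PL (ins (a+k) (a+k+1) v0) = sw (a+k+1) * PL v0 ∧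
      (PL (ins (a+k) (a+k+1) v0))⁻¹ (a+k+2) < a+k+1 := by
  obtain ⟨hnd0, hb0⟩ := NF_mem_prop a (k+1) v0 hv0
  have hle : ∀ i ∈ v0, i ≤ a + k := fun i hi => by have := hb0 i hi; omega
  have hPL : PL (ins (a+k) (a+k+1) v0) = sw (a+k+1) * PL v0 :=
    PL_ins (a+k) v0 hnd0 hle hm
  refine ⟨hPL, ?_⟩
  rw [hPL, mul_inv_rev, Equiv.Perm.mul_apply]
  have h1 : (sw (a+k+1))⁻¹ (a+k+2) = a+k+1 := by simp [sw]
  rw [h1]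
  have := PL_top_inv (a+k) v0 hnd0 hle hm
  omega

lemma ins_mem_top (s t : ℕ) (w : List ℕ) (h : s ∈ w) : t ∈ ins s t w := by
  obtain ⟨pre, suf, _, hins, _⟩ := ins_spec s t w h
  rw [hins]; simp

lemma NF_nodup (a k : ℕ) : (NF a k).Nodup := by
  induction k using Nat.strong_induction_on with
  | _ k ih =>
    match k with
    | 0 => simp [NF]
    | 1 => simp [NF]
    | (k + 2) =>
      have hA := ih (k+1) (by omega)
      rw [NF, List.append_assoc]
      apply List.Nodup.append hA
      · apply List.Nodup.append
        · exact hA.map (fun x y h => by simpa using List.append_inj_left' h rfl)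
        · apply List.Nodup.map_on
          · intro x hx y hy hxy
            simp only [List.mem_filter] at hx hy
            have hx2 : (a+k) ∈ x := by simpa using hx.2
            have hy2 : (a+k) ∈ y := by simpa using hy.2
            have e1 := (NF_dC a k x hx.1 hx2).1
            have e2 := (NF_dC a k y hy.1 hy2).1
            apply NF_inj a (k+1) x hx.1 y hy.1
            have : sw (a+k+1) * PL x = sw (a+k+1) * PL y := by rw [← e1, ← e2, hxy]
            exact mul_left_cancel this
          · exact hA.filter _
        · intro v hvB hvC
          simp only [List.mem_map] at hvB
          simp only [List.mem_map, List.mem_filter] at hvC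
          obtain ⟨x, hx, rfl⟩ := hvB
          obtain ⟨y, ⟨hy, hym⟩, hins⟩ := hvC
          have hym' : (a+k) ∈ y := by simpa using hym
          have d1 := NF_dB a k x hx
          have d2 := (NF_dC a k y hy hym').2
          rw [hins] at d2
          omega
      · intro v hvA hvBC
        have dA := (NF_fix a (k+1) v hvA (a+k+2) (by omega)).2
        rcases List.mem_append.mp hvBC with hvB | hvC
        · simp only [List.mem_map] at hvB
          obtain ⟨x, hx, rfl⟩ := hvB
          have := NF_dB a k x hx
          omega
        · simp only [List.mem_map, List.mem_filter] at hvC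
          obtain ⟨y, ⟨hy, hym⟩, hins⟩ := hvC
          have hym' : (a+k) ∈ y := by simpa using hym
          have := (NF_dC a k y hy hym').2
          rw [hins] at this
          omega

lemma NF_succ_succ (a k : ℕ) : NF a (k+2) =
    NF a (k + 1) ++ ((NF a (k + 1)).map (· ++ [a + k + 1]))
        ++ ((NF a (k + 1)).filter (fun w => (a + k) ∈ w)).map (ins (a + k) (a + k + 1)) := rfl

lemma NF_filter_top (a k : ℕ) :
    ((NF a (k+1)).filter (fun w => decide ((a+k) ∈ w))).length
      = (NF a (k+1)).length - (NF a k).length := by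
  match k with
  | 0 =>
    show (List.filter _ [[], [a]]).length = _
    have : (a + 0) ∈ [a] := by simp
    simp [NF]
  | (j + 1) =>
    have htop : a + (j + 1) = a + j + 1 := by omega
    rw [NF]
    rw [List.filter_append, List.filter_append]
    have h1 : (NF a (j+1)).filter (fun w => decide ((a+(j+1)) ∈ w)) = [] := by
      apply List.filter_eq_nil_iff.mpr
      intro w hw
      have := (NF_mem_prop a (j+1) w hw).2
      simp only [decide_eq_true_eq]
      intro hc
      have := this _ hc
      omega
    have h2 : ((NF a (j+1)).map (· ++ [a + j + 1])).filter
        (fun w => decide ((a+(j+1)) ∈ w)) = (NF a (j+1)).map (· ++ [a + j + 1]) := by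
      apply List.filter_eq_self.mpr
      intro w hw
      simp only [List.mem_map] at hw
      obtain ⟨x, _, rfl⟩ := hw
      simp [htop]
    have h3 : (((NF a (j+1)).filter (fun w => decide ((a+j) ∈ w))).map
        (ins (a+j) (a+j+1))).filter (fun w => decide ((a+(j+1)) ∈ w))
        = ((NF a (j+1)).filter (fun w => decide ((a+j) ∈ w))).map (ins (a+j) (a+j+1)) := by
      apply List.filter_eq_self.mpr
      intro w hw
      simp only [List.mem_map, List.mem_filter] at hw
      obtain ⟨x, ⟨_, hxm⟩, rfl⟩ := hw
      simp only [decide_eq_true_eq, htop]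
      exact ins_mem_top _ _ _ (by simpa using hxm)
    rw [h1, h2, h3]
    simp only [List.nil_append, List.length_append, List.length_map]
    omega

lemma NF_length (a k : ℕ) : (NF a k).length = Nat.fib (2*k+1) := by
  induction k using Nat.strong_induction_on with
  | _ k ih =>
    match k with
    | 0 => simp [NF]
    | 1 => rfl
    | (k + 2) =>
      have e1 := ih (k+1) (by omega)
      have e0 := ih k (by omega)
      have hf := NF_filter_top a k
      rw [NF_succ_succ]
      simp only [List.length_append, List.length_map]
      rw [hf, e1, e0]
      have g1 : 2*(k+1)+1 = 2*k+3 := by ring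
      have g2 : 2*(k+2)+1 = 2*k+5 := by ring
      rw [g1, g2]
      have r2 := Nat.fib_add_two (n := 2*k+1)
      have r3 := Nat.fib_add_two (n := 2*k+2)
      have r4 := Nat.fib_add_two (n := 2*k+3)
      norm_num at r2 r3 r4
      have n1 : 2*k+1+2 = 2*k+3 := by ring
      have n2 : 2*k+2+2 = 2*k+4 := by ring
      have n3 : 2*k+3+2 = 2*k+5 := by ring
      have n4 : 2*k+1+1 = 2*k+2 := by ring
      have n5 : 2*k+2+1 = 2*k+3 := by ring
      have n6 : 2*k+3+1 = 2*k+4 := by ring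
      rw [n1, n4] at r2
      rw [n2, n5] at r3
      rw [n3, n6] at r4
      omega

lemma NF_complete (a : ℕ) (ha : 1 ≤ a) (k : ℕ) :
    ∀ w : List ℕ, w.Nodup → (∀ i ∈ w, a ≤ i ∧ i < a + k) →
      ∃ w' ∈ NF a k, prodX w = prodX w' := by
  induction k using Nat.strong_induction_on with
  | _ k ih =>
    match k with
    | 0 =>
      intro w hnd hb
      refine ⟨[], by simp [NF], ?_⟩
      match w with
      | [] => rfl
      | (i :: l) => have := hb i (by simp); omega
    | 1 =>
      intro w hnd hb
      match w with
      | [] => exact ⟨[], by simp [NF], rfl⟩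
      | [x] =>
        have hx : x = a := by have := hb x (by simp); omega
        subst hx
        exact ⟨[x], by simp [NF], rfl⟩
      | (x :: y :: l) =>
        exfalso
        have hx : x = a := by have := hb x (by simp); omega
        have hy : y = a := by have := hb y (by simp); omega
        rw [List.nodup_cons] at hnd
        exact hnd.1 (by simp [hx, hy])
    | (k + 2) =>
      intro w hnd hb
      set t := a + k + 1 with ht
      by_cases htw : t ∈ w
      · obtain ⟨u, v, rfl⟩ := List.append_of_mem htw
        have hperm : (u ++ t :: v).Perm (t :: (u ++ v)) := List.perm_middle
        have hnduv : (t :: (u ++ v)).Nodup := hperm.nodup_iff.mp hnd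
        rw [List.nodup_cons] at hnduv
        have htuv : t ∉ u ++ v := hnduv.1
        have hnduv' : (u ++ v).Nodup := hnduv.2
        have hbuv : ∀ i ∈ u ++ v, a ≤ i ∧ i < a + (k + 1) := by
          intro i hi
          have h1 := hb i (hperm.symm.mem_iff.mp (by simp [hi]))
          have h2 : i ≠ t := fun hc => htuv (hc ▸ hi)
          omega
        by_cases hsv : (a + k) ∈ v
        · -- insert case
          obtain ⟨v1, v2, rfl⟩ := List.append_of_mem hsv
          have hsv1 : (a+k) ∉ v1 := by
            have : (v1 ++ (a+k) :: v2).Nodup := (List.nodup_append'.mp hnduv').2.1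
            have hp2 : (v1 ++ (a+k) :: v2).Perm ((a+k) :: (v1 ++ v2)) := List.perm_middle
            have := (hp2.nodup_iff.mp this)
            rw [List.nodup_cons] at this
            intro hc; exact this.1 (by simp [hc])
          have hsu : (a+k) ∉ u := by
            have hd := (List.nodup_append'.mp hnduv').2.2
            intro hc
            exact hd hc (by simp)
          -- v1 letters are ≤ a+k-1, hence commute with X t
          have hv1 : ∀ j ∈ v1, 1 ≤ j ∧ (j + 2 ≤ t ∨ t + 2 ≤ j) := by
            intro j hj
            have h1 := hbuv j (by simp [hj])
            have h2 : j ≠ a + k := fun hc => hsv1 (hc ▸ hj)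
            constructor
            · omega
            · left; omega
          have huv1 : ∀ j ∈ u ++ v1, 1 ≤ j ∧ (j + 2 ≤ t ∨ t + 2 ≤ j) := by
            intro j hj
            rcases List.mem_append.mp hj with hj | hj
            · have h1 := hbuv j (by simp [hj])
              have h2 : j ≠ a + k := fun hc => hsu (hc ▸ hj)
              exact ⟨by omega, Or.inl (by omega)⟩
            · exact hv1 j hj
          obtain ⟨w0, hw0, he0⟩ := ih (k+1) (by omega) (u ++ v1 ++ (a+k) :: v2)
            (by simpa [List.append_assoc] using hnduv')
            (by intro i hi; exact hbuv i (by simpa [List.append_assoc] using hi))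
          have hmem0 : (a + k) ∈ w0 := by
            have h1 : chi (a+k) (prodX (u ++ v1 ++ (a+k) :: v2)) = 0 := by
              rw [chi_prodX_eq_zero _ _ (fun i hi => by
                have := hbuv i (by simpa [List.append_assoc] using hi); omega)]
              simp
            rw [he0] at h1
            rw [chi_prodX_eq_zero _ _ (fun i hi => by
              have := (NF_mem_prop a (k+1) w0 hw0).2 i hi; omega)] at h1
            exact h1
          refine ⟨ins (a+k) t w0, ?_, ?_⟩
          · rw [NF_succ_succ]
            simp only [List.mem_append, List.mem_map, List.mem_filter]
            right
            exact ⟨w0, ⟨hw0, by simpa using hmem0⟩, rfl⟩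
          · obtain ⟨pre, suf, hw0e, hinse, hpre⟩ := ins_spec (a+k) t w0 hmem0
            have hprel : ∀ j ∈ pre, 1 ≤ j ∧ (j + 2 ≤ t ∨ t + 2 ≤ j) := by
              intro j hj
              have h1 := (NF_mem_prop a (k+1) w0 hw0).2 j (by rw [hw0e]; simp [hj])
              have h2 : j ≠ a + k := fun hc => hpre (hc ▸ hj)
              exact ⟨by omega, Or.inl (by omega)⟩
            have hul : ∀ j ∈ u, 1 ≤ j ∧ (j + 2 ≤ t ∨ t + 2 ≤ j) := by
              intro j hj
              exact huv1 j (by simp [hj])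
            have ht1 : 1 ≤ t := by omega
            have c1 := X_comm_list' t v1 ht1 hv1
            have c2 := X_comm_list' t u ht1 hul
            have c3 := X_comm_list' t pre ht1 hprel
            have key1 : prodX (u ++ t :: (v1 ++ (a+k) :: v2))
                = X t * prodX (u ++ v1 ++ (a+k) :: v2) := by
              simp only [prodX_append, prodX_cons]
              rw [c1, mul_assoc, c2, c1]
            have key2 : prodX (ins (a+k) t w0) = X t * prodX w0 := by
              rw [hinse, hw0e]
              simp only [prodX_append, prodX_cons]
              rw [c3]
            rw [key1, key2, he0]
        · -- append case
          have hv : ∀ j ∈ v, 1 ≤ j ∧ (j + 2 ≤ t ∨ t + 2 ≤ j) := by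
            intro j hj
            have h1 := hbuv j (by simp [hj])
            have h2 : j ≠ a + k := fun hc => hsv (hc ▸ hj)
            exact ⟨by omega, Or.inl (by omega)⟩
          obtain ⟨w0, hw0, he0⟩ := ih (k+1) (by omega) (u ++ v) hnduv' hbuv
          refine ⟨w0 ++ [t], ?_, ?_⟩
          · rw [NF_succ_succ]
            simp only [List.mem_append, List.mem_map]
            left; right
            exact ⟨w0, hw0, rfl⟩
          · have ht1 : 1 ≤ t := by omega
            have key : prodX (u ++ t :: v) = prodX (u ++ v) * X t := by
              simp only [prodX_append, prodX_cons]
              rw [X_comm_list t v ht1 hv, mul_assoc]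
            rw [key, he0]
            simp
      · -- t not in w
        obtain ⟨w0, hw0, he0⟩ := ih (k+1) (by omega) w hnd (by
          intro i hi
          have h1 := hb i hi
          have h2 : i ≠ t := fun hc => htw (hc ▸ hi)
          omega)
        refine ⟨w0, ?_, he0⟩
        rw [NF_succ_succ]
        simp [hw0]

---- sets of simple braids over an interval of generators
def SBI (a k : ℕ) : Set MB :=
  {z | ∃ w : List ℕ, w.Nodup ∧ (∀ i ∈ w, a ≤ i ∧ i < a + k) ∧ z = prodX w}

lemma SBI_eq_image (a k : ℕ) (ha : 1 ≤ a) :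
    SBI a k = prodX '' {w | w ∈ NF a k} := by
  ext z
  constructor
  · rintro ⟨w, hnd, hb, rfl⟩
    obtain ⟨w', hw', he⟩ := NF_complete a ha k w hnd hb
    exact ⟨w', hw', he.symm⟩
  · rintro ⟨w, hw, rfl⟩
    obtain ⟨hnd, hb⟩ := NF_mem_prop a k w hw
    exact ⟨w, hnd, hb, rfl⟩

lemma P_injOn_NF (a k : ℕ) (ha : 1 ≤ a) :
    Set.InjOn prodX {w | w ∈ NF a k} := by
  intro w hw w' hw' he
  apply NF_inj a k w hw w' hw'
  have hb := (NF_mem_prop a k w hw).2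
  have hb' := (NF_mem_prop a k w' hw').2
  have := congrArg P he
  rwa [P_prodX w (fun i hi => by have := hb i hi; omega),
    P_prodX w' (fun i hi => by have := hb' i hi; omega)] at this

lemma SBI_ncard (a k : ℕ) (ha : 1 ≤ a) : (SBI a k).ncard = Nat.fib (2*k+1) := by
  rw [SBI_eq_image a k ha, Set.ncard_image_of_injOn (P_injOn_NF a k ha)]
  have : {w | w ∈ NF a k} = ((NF a k).toFinset : Set (List ℕ)) := by
    ext w; simp
  rw [this, Set.ncard_coe_finset, List.toFinset_card_of_nodup (NF_nodup a k), NF_length]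

lemma SBI_finite (a k : ℕ) (ha : 1 ≤ a) : (SBI a k).Finite := by
  rw [SBI_eq_image a k ha]
  apply Set.Finite.image
  have : {w | w ∈ NF a k} = ((NF a k).toFinset : Set (List ℕ)) := by ext w; simp
  rw [this]
  exact (NF a k).toFinset.finite_toSet

-- P is injective on SBI
lemma P_injOn_SBI (a k : ℕ) (ha : 1 ≤ a) : Set.InjOn P (SBI a k) := by
  intro z hz z' hz' he
  rw [SBI_eq_image a k ha] at hz hz'
  obtain ⟨w, hw, rfl⟩ := hz
  obtain ⟨w', hw', rfl⟩ := hz'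
  have hb := (NF_mem_prop a k w hw).2
  have hb' := (NF_mem_prop a k w' hw').2
  rw [P_prodX w (fun i hi => by have := hb i hi; omega),
    P_prodX w' (fun i hi => by have := hb' i hi; omega)] at he
  rw [NF_inj a k w hw w' hw' he]

lemma SB_eq_SBI (n : ℕ) (hn : 1 ≤ n) : SB n = SBI 1 (n-1) := by
  unfold SB SBI prodX
  ext z
  constructor
  · rintro ⟨w, hnd, hb, rfl⟩
    exact ⟨w, hnd, fun i hi => by have := hb i hi; omega, rfl⟩
  · rintro ⟨w, hnd, hb, rfl⟩
    exact ⟨w, hnd, fun i hi => by have := hb i hi; omega, rfl⟩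

---- more perm lemmas for the non-commutation argument
lemma sw_mem_cases (j x : ℕ) : sw j x = x ∨ sw j x = j ∨ sw j x = j + 1 := by
  simp only [sw, Equiv.swap_apply_def]
  split_ifs <;> simp

lemma PL_fix_mixed (l : List ℕ) (x : ℕ) (h : ∀ j ∈ l, j + 1 < x ∨ x < j) :
    PL l x = x := by
  induction l with
  | nil => simp
  | cons a m ih =>
    rw [PL_cons, Equiv.Perm.mul_apply, ih (fun j hj => h j (by simp [hj]))]
    rcases h a (by simp) with h | h
    · exact sw_apply_high a x h
    · exact sw_apply_low a x h

lemma perm_inv_fix (f : Equiv.Perm ℕ) (x : ℕ) (h : f x = x) : f⁻¹ x = x :=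
  Equiv.Perm.inv_eq_iff_eq.mpr h.symm

lemma PL_preserve_high (l : List ℕ) (n : ℕ) (h : ∀ j ∈ l, j ≠ n) :
    ∀ y, n + 1 ≤ y → n + 1 ≤ PL l y := by
  induction l with
  | nil => simp
  | cons a m ih =>
    intro y hy
    rw [PL_cons, Equiv.Perm.mul_apply]
    have hy' := ih (fun j hj => h j (by simp [hj])) y hy
    have ha := h a (by simp)
    rcases Nat.lt_or_ge a n with hlt | hge
    · rw [sw_apply_high a _ (by omega)]; exact hy'
    · have : n + 1 ≤ a := by omega
      rcases sw_mem_cases a (PL m y) with hh | hh | hh <;> omega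

lemma PL_preserve_low (l : List ℕ) (n : ℕ) (h : ∀ j ∈ l, j ≠ n) :
    ∀ y, y ≤ n → PL l y ≤ n := by
  induction l with
  | nil => simp
  | cons a m ih =>
    intro y hy
    rw [PL_cons, Equiv.Perm.mul_apply]
    have hy' := ih (fun j hj => h j (by simp [hj])) y hy
    have ha := h a (by simp)
    rcases Nat.lt_or_ge a n with hlt | hge
    · rcases sw_mem_cases a (PL m y) with hh | hh | hh <;> omega
    · rw [sw_apply_low a _ (by omega)]; exact hy'

lemma inv_preserve_high (f : Equiv.Perm ℕ) (n : ℕ) (h : ∀ x ≤ n, f x ≤ n) :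
    ∀ y, n + 1 ≤ y → n + 1 ≤ f⁻¹ y := by
  intro y hy
  by_contra hc
  push_neg at hc
  have : f (f⁻¹ y) ≤ n := h _ (by omega)
  simp at this
  omega

lemma not_comm (n m : ℕ) (hn : 2 ≤ n) (wβ wγ : List ℕ)
    (hndβ : wβ.Nodup) (hbβ : ∀ i ∈ wβ, 1 ≤ i ∧ i < n) (hmem : (n-1) ∈ wβ)
    (hndγ : wγ.Nodup) (hbγ : ∀ i ∈ wγ, 1 ≤ i ∧ i < n + m) (hnγ : n ∈ wγ) :
    PL wβ * PL wγ ≠ PL wγ * PL wβ := by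
  intro heq
  set b := PL wβ with hbdef
  set g := PL wγ with hgdef
  have bfix : ∀ x, n + 1 ≤ x → b x = x := by
    intro x hx
    exact PL_fix_high _ _ (fun j hj => by have := hbβ j hj; omega)
  have bn : b n ≤ n - 1 := by
    have hle : ∀ i ∈ wβ, i ≤ n - 1 := fun i hi => by have := hbβ i hi; omega
    have := PL_top (n-1) wβ hndβ hle hmem
    have hnn : n - 1 + 1 = n := by omega
    rw [hnn] at this
    exact this
  have bnlt : b n < n := by omega
  obtain ⟨u, v, rfl⟩ := List.append_of_mem hnγ
  have hperm : (u ++ n :: v).Perm (n :: (u ++ v)) := List.perm_middle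
  have hnodup := hperm.nodup_iff.mp hndγ
  rw [List.nodup_cons] at hnodup
  have hnu : n ∉ u := fun hc => hnodup.1 (by simp [hc])
  have hnv : n ∉ v := fun hc => hnodup.1 (by simp [hc])
  have hgsplit : g = PL u * sw n * PL v := by
    rw [hgdef, PL_append, PL_cons, mul_assoc]
  by_cases hsv : (n-1) ∈ v
  · -- the inverse argument
    have hsu : (n-1) ∉ u := by
      intro hc
      have hd := (List.nodup_append'.mp hnodup.2).2.2
      exact hd hc hsv
    have hufix : PL u n = n := PL_fix_mixed u n (fun j hj => by
      have h1 := hbγ j (by simp [hj])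
      have h2 : j ≠ n := fun hc => hnu (hc ▸ hj)
      have h3 : j ≠ n - 1 := fun hc => hsu (hc ▸ hj)
      omega)
    have hginv : n + 1 ≤ g⁻¹ n := by
      rw [hgsplit]
      simp only [mul_inv_rev, Equiv.Perm.mul_apply]
      rw [perm_inv_fix (PL u) n hufix]
      have hswn : (sw n)⁻¹ n = n + 1 := by simp [sw]
      rw [hswn]
      apply inv_preserve_high (PL v) n
      · intro x hx
        exact PL_preserve_low v n (fun j hj => fun hc => hnv (hc ▸ hj)) x hx
      · omega
    have heq' : g⁻¹ * b = b * g⁻¹ := by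
      have h1 : b * g = g * b := heq
      calc g⁻¹ * b = g⁻¹ * (b * g) * g⁻¹ := by group
        _ = g⁻¹ * (g * b) * g⁻¹ := by rw [h1]
        _ = b * g⁻¹ := by group
    have e1 : (g⁻¹ * b) n = g⁻¹ (b n) := by simp
    have e2 : (b * g⁻¹) n = g⁻¹ n := by
      simp only [Equiv.Perm.mul_apply]
      exact bfix _ hginv
    rw [heq'] at e1
    rw [e2] at e1
    have : b n = n := g⁻¹.injective e1.symm
    omega
  · -- the direct argument
    have hvfix : PL v n = n := PL_fix_mixed v n (fun j hj => by
      have h1 := hbγ j (by simp [hj])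
      have h2 : j ≠ n := fun hc => hnv (hc ▸ hj)
      have h3 : j ≠ n - 1 := fun hc => hsv (hc ▸ hj)
      omega)
    have hgn : n + 1 ≤ g n := by
      rw [hgsplit]
      simp only [Equiv.Perm.mul_apply]
      rw [hvfix, sw_apply_self]
      exact PL_preserve_high u n (fun j hj => fun hc => hnu (hc ▸ hj)) (n+1) le_rfl
    have e1 : (b * g) n = g n := by
      simp only [Equiv.Perm.mul_apply]
      exact bfix _ hgn
    have e2 : (g * b) n = g (b n) := by simp
    rw [heq] at e1
    rw [e2] at e1
    have : b n = n := g.injective e1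
    omega

lemma prodX_split (n : ℕ) (w : List ℕ) (hw : ∀ i ∈ w, 1 ≤ i ∧ i ≠ n) :
    prodX w = prodX (w.filter (fun i => decide (i < n)))
      * prodX (w.filter (fun i => decide (n < i))) := by
  induction w with
  | nil => simp
  | cons a l ih =>
    have ha := hw a (by simp)
    have ih' := ih (fun i hi => hw i (by simp [hi]))
    rcases Nat.lt_or_ge a n with hlt | hge
    · rw [List.filter_cons_of_pos (by simpa using hlt),
        List.filter_cons_of_neg (by simp; omega), prodX_cons, prodX_cons, ih', mul_assoc]
    · have hgt : n < a := by omega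
      rw [List.filter_cons_of_neg (by simp; omega),
        List.filter_cons_of_pos (by simpa using hgt), prodX_cons, ih']
      have hcomm : X a * prodX (l.filter (fun i => decide (i < n)))
          = prodX (l.filter (fun i => decide (i < n))) * X a := by
        apply X_comm_list a _ ha.1
        intro j hj
        have hj1 := List.of_mem_filter hj
        have hj2 := hw j (by simp [List.mem_of_mem_filter hj])
        simp at hj1
        exact ⟨hj2.1, Or.inl (by omega)⟩
      rw [← mul_assoc, hcomm, mul_assoc, prodX_cons, ← mul_assoc]

lemma ncard_prod {α β : Type*} (s : Set α) (t : Set β) :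
    (s ×ˢ t).ncard = s.ncard * t.ncard := by
  rw [← Nat.card_coe_set_eq, ← Nat.card_coe_set_eq, ← Nat.card_coe_set_eq,
    ← Nat.card_prod]
  exact Nat.card_congr (Equiv.Set.prod s t)

/-- Corollary 1.4: if `β ∈ SB_n` with `x_{n-1} ∣ β`, then
`c_{n+m}(β) = c_n(β) · F_{2m-1}` for all `m ≥ 1`. -/
theorem simple_centralizer_card (n m : ℕ) (hn : 2 ≤ n) (hm : 1 ≤ m) (β : MB)
    (hβ : β ∈ SB n) (hdvd : GenDvd (n - 1) β) :
    c (n + m) β = c n β * Nat.fib (2 * m - 1) := by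
  obtain ⟨wβ, hndβ, hbβ, hβe⟩ := hβ
  have hβe : β = prodX wβ := hβe
  -- the letter n-1 occurs in wβ
  have hmem : (n - 1) ∈ wβ := by
    obtain ⟨δ, ε, hde⟩ := hdvd
    have h0 : chi (n-1) β = 0 := by
      rw [hde, map_mul, map_mul, chi_X (n-1) (n-1) (by omega)]
      simp
    rw [hβe, chi_prodX_eq_zero _ _ (fun i hi => (hbβ i hi).1)] at h0
    exact h0
  have hPβ : P β = PL wβ := by rw [hβe]; exact P_prodX _ (fun i hi => (hbβ i hi).1)
  set Hset := SBI (n+1) (m-1) with hHdef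
  -- main set identity
  have hset : C (n + m) β = (fun p : MB × MB => p.1 * p.2) '' ((C n β) ×ˢ Hset) := by
    ext γ
    constructor
    · rintro ⟨⟨w, hnd, hb, hγe⟩, hcm⟩
      have hγe : γ = prodX w := hγe
      -- n does not occur in w
      have hnw : n ∉ w := by
        intro hnw
        have := not_comm n m hn wβ w hndβ hbβ hmem hnd hb hnw
        apply this
        have := congrArg P hcm
        rw [map_mul, map_mul, hPβ, hγe, P_prodX _ (fun i hi => (hb i hi).1)] at this
        exact this
      have hwprop : ∀ i ∈ w, 1 ≤ i ∧ i ≠ n := by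
        intro i hi
        exact ⟨(hb i hi).1, fun hc => hnw (hc ▸ hi)⟩
      set lo := w.filter (fun i => decide (i < n)) with hlo
      set hi := w.filter (fun i => decide (n < i)) with hhi
      have hsplit : γ = prodX lo * prodX hi := by
        rw [hγe]; exact prodX_split n w hwprop
      have hloP : ∀ i ∈ lo, 1 ≤ i ∧ i < n := by
        intro i hi'
        have h1 := List.of_mem_filter hi'
        simp at h1
        exact ⟨(hwprop i (List.mem_of_mem_filter hi')).1, h1⟩
      have hhiP : ∀ i ∈ hi, n + 1 ≤ i ∧ i < n + m := by
        intro i hi'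
        have h1 := List.of_mem_filter hi'
        simp at h1
        exact ⟨by omega, (hb i (List.mem_of_mem_filter hi')).2⟩
      have hndlo : lo.Nodup := hnd.filter _
      have hndhi : hi.Nodup := hnd.filter _
      have hβhi : β * prodX hi = prodX hi * β := by
        rw [hβe]
        apply prodX_comm_lists wβ hi (fun i hi' => (hbβ i hi').1)
        intro i hiw j hjh
        have := hbβ i hiw
        have := hhiP j hjh
        exact ⟨by omega, Or.inl (by omega)⟩
      have hcancel : β * prodX lo = prodX lo * β := by
        apply cancel_prodX (n+1) hi hndhi
          (fun i hi' => ⟨(hhiP i hi').1, by have := hhiP i hi'; omega⟩)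
          (β * prodX lo) (prodX lo * β) (wβ ++ lo) (lo ++ wβ)
        · intro i hi'
          rcases List.mem_append.mp hi' with h | h
          · have := hbβ i h; omega
          · have := hloP i h; omega
        · intro i hi'
          rcases List.mem_append.mp hi' with h | h
          · have := hloP i h; omega
          · have := hbβ i h; omega
        · rw [prodX_append, hβe]
        · rw [prodX_append, hβe]
        · calc β * prodX lo * prodX hi = β * γ := by rw [hsplit, mul_assoc]
            _ = γ * β := hcm
            _ = prodX lo * (prodX hi * β) := by rw [hsplit, mul_assoc]
            _ = prodX lo * (β * prodX hi) := by rw [hβhi]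
            _ = prodX lo * β * prodX hi := by rw [mul_assoc]
      refine ⟨(prodX lo, prodX hi), ⟨⟨⟨lo, hndlo, hloP, rfl⟩, hcancel⟩, ?_⟩, hsplit.symm⟩
      exact ⟨hi, hndhi, fun i hi' => by have := hhiP i hi'; constructor <;> omega, rfl⟩
    · rintro ⟨⟨γ1, γ2⟩, ⟨⟨⟨w1, hnd1, hb1, he1⟩, hcm1⟩, ⟨w2, hnd2, hb2, he2⟩⟩, rfl⟩
      have he1 : γ1 = prodX w1 := he1
      have he2 : γ2 = prodX w2 := he2
      have hb2' : ∀ i ∈ w2, n + 1 ≤ i ∧ i < n + m := by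
        intro i hi
        have := hb2 i hi
        omega
      have hβγ2 : β * γ2 = γ2 * β := by
        rw [hβe, he2]
        apply prodX_comm_lists wβ w2 (fun i hi' => (hbβ i hi').1)
        intro i hiw j hjh
        have := hbβ i hiw
        have := hb2' j hjh
        exact ⟨by omega, Or.inl (by omega)⟩
      constructor
      · refine ⟨w1 ++ w2, ?_, ?_, by rw [he1, he2]; exact (prodX_append w1 w2).symm⟩
        · apply List.Nodup.append hnd1 hnd2
          intro x hx1 hx2
          have := hb1 x hx1
          have := hb2' x hx2
          omega
        · intro i hi
          rcases List.mem_append.mp hi with h | h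
          · have := hb1 i h; constructor <;> omega
          · have := hb2' i h; constructor <;> omega
      · calc β * (γ1 * γ2) = β * γ1 * γ2 := by rw [mul_assoc]
          _ = γ1 * β * γ2 := by rw [hcm1]
          _ = γ1 * (β * γ2) := by rw [mul_assoc]
          _ = γ1 * (γ2 * β) := by rw [hβγ2]
          _ = γ1 * γ2 * β := by rw [mul_assoc]
  -- injectivity of the multiplication map on the product set
  have hinj : Set.InjOn (fun p : MB × MB => p.1 * p.2) ((C n β) ×ˢ Hset) := by
    rintro ⟨γ1, γ2⟩ ⟨hγ1, hγ2⟩ ⟨γ1', γ2'⟩ ⟨hγ1', hγ2'⟩ hprod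
    simp only at hprod
    obtain ⟨w1, hnd1, hb1, he1⟩ := hγ1.1
    obtain ⟨w1', hnd1', hb1', he1'⟩ := hγ1'.1
    obtain ⟨w2, hnd2, hb2, he2⟩ := hγ2
    obtain ⟨w2', hnd2', hb2', he2'⟩ := hγ2'
    have he1 : γ1 = prodX w1 := he1
    have he1' : γ1' = prodX w1' := he1'
    have he2 : γ2 = prodX w2 := he2
    have he2' : γ2' = prodX w2' := he2'
    have hP1 : P γ1 = PL w1 := by rw [he1]; exact P_prodX _ (fun i hi => (hb1 i hi).1)
    have hP1' : P γ1' = PL w1' := by rw [he1']; exact P_prodX _ (fun i hi => (hb1' i hi).1)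
    have hP2 : P γ2 = PL w2 := by
      rw [he2]; exact P_prodX _ (fun i hi => by have := hb2 i hi; omega)
    have hP2' : P γ2' = PL w2' := by
      rw [he2']; exact P_prodX _ (fun i hi => by have := hb2' i hi; omega)
    have hPP := congrArg P hprod
    rw [map_mul, map_mul] at hPP
    have hfix1 : P γ1 = P γ1' := by
      apply Equiv.ext
      intro x
      rcases le_or_gt x n with hx | hx
      · have l2 : P γ2 x = x := by
          rw [hP2]
          exact PL_fix_low _ _ (fun j hj => by have := hb2 j hj; omega)
        have l2' : P γ2' x = x := by
          rw [hP2']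
          exact PL_fix_low _ _ (fun j hj => by have := hb2' j hj; omega)
        have := congrFun (congrArg (fun (f : Equiv.Perm ℕ) => (f : ℕ → ℕ)) hPP) x
        simp only [Equiv.Perm.coe_mul, Function.comp_apply] at this
        rwa [l2, l2'] at this
      · have l1 : P γ1 x = x := by
          rw [hP1]
          exact PL_fix_high _ _ (fun j hj => by have := hb1 j hj; omega)
        have l1' : P γ1' x = x := by
          rw [hP1']
          exact PL_fix_high _ _ (fun j hj => by have := hb1' j hj; omega)
        rw [l1, l1']
    have hfix2 : P γ2 = P γ2' := by
      rw [hfix1] at hPP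
      exact mul_left_cancel hPP
    have hγ2e : γ2 = γ2' := by
      apply P_injOn_SBI (n+1) (m-1) (by omega) _ _ hfix2
      · exact ⟨w2, hnd2, hb2, he2⟩
      · exact ⟨w2', hnd2', hb2', he2'⟩
    have hγ1e : γ1 = γ1' := by
      apply cancel_prodX (n+1) w2 hnd2
        (fun i hi => ⟨(hb2 i hi).1, by have := hb2 i hi; omega⟩) γ1 γ1' w1 w1'
      · intro i hi; have := hb1 i hi; omega
      · intro i hi; have := hb1' i hi; omega
      · exact he1
      · exact he1'
      · rw [← he2, hprod, hγ2e]
    rw [Prod.mk.injEq]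
    exact ⟨hγ1e, hγ2e⟩
  -- the count
  have hH : Hset.ncard = Nat.fib (2 * m - 1) := by
    rw [hHdef, SBI_ncard (n+1) (m-1) (by omega)]
    congr 1
    omega
  show (C (n+m) β).ncard = _
  rw [hset, Set.ncard_image_of_injOn hinj, ncard_prod, hH]
  rfl
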